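/- In the hyperbolic region c_p|ξ'| < |τ|, with ξ₃ᵖ = √(c_p⁻²τ² − |ξ'|²) > 0 and ξ₃ˢ = √(c_s⁻²τ² − |ξ'|²) > 0, the quantity −ρ(c_p²|ξ'|² − τ²)·((2μ|ξ'|² − ρτ²)² + 4μ²|ξ'|²ξ₃ᵖξ₃ˢ) is strictly positive, provided (2μ|ξ'|² − ρτ², ξ') ≠ 0. -/
import Mathlib


open scoped BigOperators

/-- In the hyperbolic region `c_p|ξ'| < |τ|`, the determinant
`−ρ(c_p²|ξ'|² − τ²)((2μ|ξ'|² − ρτ²)² + 4μ²|ξ'|²ξ₃ᵖξ₃ˢ)` of `σ_p(M_out)` is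
strictly positive, provided `(2μ|ξ'|² − ρτ², ξ') ≠ 0`. -/
theorem stmt_6 (mu rho cs cp τ : ℝ) (hmu : 0 < mu) (hrho : 0 < rho)
    (hcs : cs = Real.sqrt (mu / rho)) (hcscp : cs < cp) (hτ : τ ≠ 0)
    (ξ' : Fin 2 → ℝ)
    (hhyp : cp ^ 2 * (∑ i, ξ' i ^ 2) < τ ^ 2)
    (hnd : ¬ (2 * mu * (∑ i, ξ' i ^ 2) - rho * τ ^ 2 = 0 ∧ ξ' = 0)) :
    0 < -rho * (cp ^ 2 * (∑ i, ξ' i ^ 2) - τ ^ 2)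
        * ((2 * mu * (∑ i, ξ' i ^ 2) - rho * τ ^ 2) ^ 2
            + 4 * mu ^ 2 * (∑ i, ξ' i ^ 2)
              * Real.sqrt (τ ^ 2 / cp ^ 2 - (∑ i, ξ' i ^ 2))
              * Real.sqrt (τ ^ 2 / cs ^ 2 - (∑ i, ξ' i ^ 2))) := by
  set S := ∑ i, ξ' i ^ 2 with hS
  have hSnonneg : 0 ≤ S := Finset.sum_nonneg fun i _ => sq_nonneg _
  have hcs0 : 0 < cs := by
    rw [hcs]; exact Real.sqrt_pos.mpr (div_pos hmu hrho)
  have hcp0 : 0 < cp := hcs0.trans hcscp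
  have hτ2 : 0 < τ ^ 2 := pow_pos (abs_pos.mpr hτ) 2 |>.trans_eq (by rw [sq_abs])
  have h1 : 0 < -rho * (cp ^ 2 * S - τ ^ 2) := by nlinarith
  have hp : 0 < τ ^ 2 / cp ^ 2 - S := by
    rw [sub_pos, lt_div_iff₀ (by positivity)]; nlinarith
  have hs : 0 < τ ^ 2 / cs ^ 2 - S := by
    have : τ ^ 2 / cp ^ 2 ≤ τ ^ 2 / cs ^ 2 :=
      div_le_div_of_nonneg_left hτ2.le (by positivity) (by nlinarith)
    linarith
  have h2 : 0 < (2 * mu * S - rho * τ ^ 2) ^ 2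
      + 4 * mu ^ 2 * S * Real.sqrt (τ ^ 2 / cp ^ 2 - S)
        * Real.sqrt (τ ^ 2 / cs ^ 2 - S) := by
    rcases eq_or_lt_of_le hSnonneg with hS0 | hS0
    · have hxi : ξ' = 0 := by
        funext i
        have := Finset.sum_eq_zero_iff_of_nonneg (fun i _ => sq_nonneg (ξ' i)) |>.mp hS0.symm
        have := this i (Finset.mem_univ i)
        exact pow_eq_zero_iff (n := 2) (by norm_num) |>.mp this
      have hne : 2 * mu * S - rho * τ ^ 2 ≠ 0 := fun h => hnd ⟨h, hxi⟩
      have hsq : 0 < (2 * mu * S - rho * τ ^ 2) ^ 2 := by positivity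
      have hsp := Real.sqrt_nonneg (τ ^ 2 / cp ^ 2 - S)
      have hz : 4 * mu ^ 2 * S * Real.sqrt (τ ^ 2 / cp ^ 2 - S)
          * Real.sqrt (τ ^ 2 / cs ^ 2 - S) = 0 := by rw [← hS0]; ring
      linarith
    · have := Real.sqrt_pos.mpr hp
      have := Real.sqrt_pos.mpr hs
      have : 0 < 4 * mu ^ 2 * S * Real.sqrt (τ ^ 2 / cp ^ 2 - S)
          * Real.sqrt (τ ^ 2 / cs ^ 2 - S) := by positivity
      nlinarith [sq_nonneg (2 * mu * S - rho * τ ^ 2)]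
  exact mul_pos h1 h2
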